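/- For integers n > 1 and 0 ≤ k ≤ n-2, the congruence [2k choose k+1]_q ≡ (-1)^{k+1} q^{(3k²+3k)/2} [n-k choose k+1]_q holds modulo Φ_n(q), and for k = n-1 one has [2k choose k+1]_q ≡ 1 (mod Φ_n(q)). -/

import Mathlib

open Polynomial Finset

/-- The Gaussian (q-)binomial coefficient as a polynomial in `ℤ[q]`
(via the standard Pascal recursion `[n+1,k+1] = [n,k] + q^(k+1)·[n,k+1]`). -/
noncomputable def gbinom : ℕ → ℕ → Polynomial ℤ
  | _, 0 => 1
  | 0, _ + 1 => 0
  | n + 1, k + 1 => gbinom n k + Polynomial.X ^ (k + 1) * gbinom n (k + 1)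

noncomputable def qint (m : ℕ) : Polynomial ℤ := ∑ i ∈ Finset.range m, X ^ i

noncomputable def qfact : ℕ → Polynomial ℤ
  | 0 => 1
  | r + 1 => qfact r * qint (r + 1)

lemma qint_add (a b : ℕ) : qint (a + b) = qint a + X ^ a * qint b := by
  simp [qint, Finset.sum_range_add, pow_add, Finset.mul_sum]

lemma qint_ne_zero {m : ℕ} (hm : 0 < m) : qint m ≠ 0 := by
  intro h
  have := congrArg (Polynomial.eval 1) h
  simp [qint] at this
  omega

lemma gbinom_eq_zero {m r : ℕ} (h : m < r) : gbinom m r = 0 := by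
  induction m generalizing r with
  | zero => cases r with
    | zero => omega
    | succ s => simp [gbinom]
  | succ m ih => cases r with
    | zero => omega
    | succ s => simp [gbinom, ih (show m < s by omega), ih (show m < s + 1 by omega)]

lemma gbinom_one (m : ℕ) : gbinom m 1 = qint m := by
  induction m with
  | zero =>
    show (0 : Polynomial ℤ) = _
    simp [qint]
  | succ m ih =>
    have h : qint (m + 1) = 1 + X * qint m := by
      rw [add_comm m 1, qint_add]; simp [qint]
    show gbinom m 0 + X ^ 1 * gbinom m 1 = _
    simp [gbinom, ih, h]

lemma qfact_eq_prod (r : ℕ) : qfact r = ∏ i ∈ Finset.range r, qint (i + 1) := by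
  induction r with
  | zero => rfl
  | succ r ih => rw [Finset.prod_range_succ, ← ih]; rfl

lemma qfact_add (a b : ℕ) :
    qfact (a + b) = qfact a * ∏ i ∈ Finset.range b, qint (a + 1 + i) := by
  rw [qfact_eq_prod, qfact_eq_prod, Finset.prod_range_add]
  congr 1
  apply Finset.prod_congr rfl
  intro i _
  congr 1
  omega

lemma gbinom_key : ∀ m r : ℕ, r ≤ m →
    gbinom m r * (qfact r * qfact (m - r)) = qfact m := by
  intro m
  induction m with
  | zero =>
    intro r hr
    interval_cases r
    simp [gbinom, qfact]
  | succ m ih =>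
    intro r hr
    cases r with
    | zero => simp [gbinom, qfact]
    | succ s =>
      have hsm : s ≤ m := by omega
      rcases eq_or_lt_of_le hsm with heq | hlt
      · subst heq
        have h0 : gbinom s (s + 1) = 0 := gbinom_eq_zero (by omega)
        show (gbinom s s + X ^ (s + 1) * gbinom s (s + 1)) * _ = _
        rw [h0, mul_zero, add_zero]
        have := ih s le_rfl
        simp only [Nat.sub_self] at this ⊢
        show gbinom s s * (qfact s * qint (s + 1) * qfact 0) = qfact s * qint (s + 1)
        have hq0 : qfact 0 = 1 := rfl
        rw [hq0, mul_one, ← mul_assoc]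
        rw [hq0, mul_one] at this
        linear_combination qint (s + 1) * this
      · -- s + 1 ≤ m
        have h1 := ih s hsm
        have h2 := ih (s + 1) (by omega)
        have hms : m - s = (m - (s + 1)) + 1 := by omega
        show (gbinom m s + X ^ (s + 1) * gbinom m (s + 1)) * _ = _
        have hq1 : qfact (s + 1) = qfact s * qint (s + 1) := rfl
        have hq2 : qfact (m - s) = qfact (m - (s + 1)) * qint (m - s) := by
          rw [hms]; rfl
        have hq3 : qfact (m + 1) = qfact m * qint (m + 1) := rfl
        have hqi : qint (m + 1) = qint (s + 1) + X ^ (s + 1) * qint (m - s) := by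
          rw [show m + 1 = (s + 1) + (m - s) by omega] at *
          exact qint_add (s + 1) (m - s)
        have hsub : m + 1 - (s + 1) = m - s := by omega
        rw [hsub, hq1, hq2, hq3, hqi]
        rw [hq2] at h1
        rw [hq1] at h2
        linear_combination qint (s + 1) * h1 + X ^ (s + 1) * qint (m - s) * h2


set_option maxHeartbeats 1000000 in
/-- For `n > 1`: for `0 ≤ k ≤ n-2`,
`[2k, k+1]_q ≡ (-1)^(k+1) q^((3k²+3k)/2) [n-k, k+1]_q (mod Φ_n(q))`,
and for `k = n-1`, `[2k, k+1]_q ≡ 1 (mod Φ_n(q))`. -/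
theorem stmt_5 (n : ℕ) (hn : 1 < n) :
    (∀ k : ℕ, k ≤ n - 2 →
      Polynomial.cyclotomic n ℤ ∣
        (gbinom (2 * k) (k + 1) -
          (-1) ^ (k + 1) * Polynomial.X ^ ((3 * k ^ 2 + 3 * k) / 2) *
            gbinom (n - k) (k + 1))) ∧
    Polynomial.cyclotomic n ℤ ∣ (gbinom (2 * (n - 1)) ((n - 1) + 1) - 1) := by
  have hprime : Prime (cyclotomic n ℤ) :=
    (cyclotomic.irreducible (show 0 < n by omega)).prime
  letI I : Ideal (Polynomial ℤ) := Ideal.span {cyclotomic n ℤ}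
  haveI hI : I.IsPrime :=
    (Ideal.span_singleton_prime (cyclotomic_ne_zero n ℤ)).mpr hprime
  let f : Polynomial ℤ →+* (Polynomial ℤ ⧸ I) := Ideal.Quotient.mk I
  have hdvd : ∀ p : Polynomial ℤ, cyclotomic n ℤ ∣ p ↔ f p = 0 := fun p =>
    (Ideal.Quotient.eq_zero_iff_dvd (cyclotomic n ℤ) p).symm
  have hQn : f (qint n) = 0 := by
    rw [← hdvd, qint]
    exact cyclotomic_dvd_geom_sum_of_dvd ℤ dvd_rfl (by omega)
  have hxn : (f X) ^ n = 1 := by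
    have h : f (X ^ n - 1) = 0 := by
      rw [← hdvd]; exact cyclotomic.dvd_X_pow_sub_one n ℤ
    rw [map_sub, map_pow, map_one, sub_eq_zero] at h
    exact h
  have hQne : ∀ i : ℕ, 0 < i → i < n → f (qint i) ≠ 0 := by
    intro i h0 hlt hcon
    have hdv : cyclotomic n ℤ ∣ qint i := (hdvd _).mpr hcon
    have hdv2 : cyclotomic n ℤ ∣ X ^ i - 1 := by
      have hgs : qint i * (X - 1) = X ^ i - 1 := by
        rw [qint]; exact geom_sum_mul X i
      exact hgs ▸ (hdv.mul_right (X - 1))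
    obtain ⟨g, hg⟩ := hdv2
    set ζ : ℂ := Complex.exp (2 * Real.pi * Complex.I / n) with hζdef
    have hζ := Complex.isPrimitiveRoot_exp n (show n ≠ 0 by omega)
    have hroot : (Polynomial.aeval ζ) (cyclotomic n ℤ) = 0 := by
      rw [aeval_def, ← eval_map, map_cyclotomic]
      exact hζ.isRoot_cyclotomic (by omega)
    have h1 : ζ ^ i - 1 = 0 := by
      have := congrArg (Polynomial.aeval ζ) hg
      simpa [hroot] using this
    exact hζ.pow_ne_one_of_pos_of_lt h0.ne' hlt (by linear_combination h1)
  have hFne : ∀ r : ℕ, r < n → f (qfact r) ≠ 0 := by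
    intro r hr
    rw [qfact_eq_prod, map_prod]
    apply Finset.prod_ne_zero_iff.mpr
    intro i hi
    exact hQne (i + 1) (by omega) (by have := Finset.mem_range.mp hi; omega)
  have hrefl : ∀ j : ℕ, j ≤ n → f (qint (n - j)) = -((f X) ^ (n - j)) * f (qint j) := by
    intro j hj
    have h := qint_add (n - j) j
    rw [show n - j + j = n by omega] at h
    have h2 := congrArg f h
    rw [hQn, map_add, map_mul, map_pow] at h2
    linear_combination -h2
  have hshift : ∀ j : ℕ, f (qint (n + j)) = f (qint j) := by
    intro j
    have h := congrArg f (qint_add n j)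
    rw [map_add, map_mul, map_pow, hQn, zero_add, hxn, one_mul] at h
    exact h
  have hFn0 : f (qfact n) = 0 := by
    have h1 : qfact (n - 1 + 1) = qfact (n - 1) * qint (n - 1 + 1) := rfl
    rw [show n - 1 + 1 = n by omega] at h1
    rw [h1, map_mul, hQn, mul_zero]
  constructor
  · -- part 1
    intro k hk
    rw [hdvd, map_sub, sub_eq_zero, map_mul, map_mul, map_pow, map_pow, map_neg,
      map_one]
    rcases Nat.eq_zero_or_pos k with rfl | hk1
    · have hA : gbinom (2 * 0) (0 + 1) = 0 := gbinom_eq_zero (by omega)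
      rw [hA, map_zero, Nat.sub_zero, gbinom_one, hQn, mul_zero]
    rcases le_or_gt n (2 * k) with hcase | hcase
    · -- both sides vanish
      have hB : gbinom (n - k) (k + 1) = 0 := gbinom_eq_zero (by omega)
      rw [hB, map_zero, mul_zero]
      have hkA := congrArg f (gbinom_key (2 * k) (k + 1) (by omega))
      rw [show 2 * k - (k + 1) = k - 1 by omega, map_mul, map_mul] at hkA
      have hF2k : f (qfact (2 * k)) = 0 := by
        have h := qfact_add n (2 * k - n)
        rw [show n + (2 * k - n) = 2 * k by omega] at h
        rw [h, map_mul, hFn0, zero_mul]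
      rw [hF2k] at hkA
      have hCne : f (qfact (k + 1)) * f (qfact (k - 1)) ≠ 0 :=
        mul_ne_zero (hFne _ (by omega)) (hFne _ (by omega))
      exact (mul_eq_zero.mp hkA).resolve_right hCne
    · -- main case: 1 ≤ k, 2k < n
      obtain ⟨t, ht⟩ : ∃ t, n = 2 * k + t := ⟨n - 2 * k, by omega⟩
      obtain ⟨c, hc⟩ : ∃ c, k * (k + 1) = 2 * c := (Nat.even_mul_succ_self k).two_dvd
      have h6c : 3 * k ^ 2 + 3 * k = 6 * c := by
        zify at hc ⊢
        linear_combination 3 * hc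
      have hE : (3 * k ^ 2 + 3 * k) / 2 = 3 * c := by rw [h6c]; omega
      rw [hE]
      have hkA := congrArg f (gbinom_key (2 * k) (k + 1) (by omega))
      rw [show 2 * k - (k + 1) = k - 1 by omega, map_mul, map_mul] at hkA
      have hkB := congrArg f (gbinom_key (n - k) (k + 1) (by omega))
      rw [show n - k - (k + 1) = n - (2 * k + 1) by omega, map_mul, map_mul] at hkB
      have hsplitA : f (qfact (2 * k)) =
          f (qfact (k - 1)) * ∏ i ∈ Finset.range (k + 1), f (qint (k + i)) := by
        have h := qfact_add (k - 1) (k + 1)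
        rw [show k - 1 + (k + 1) = 2 * k by omega] at h
        rw [h, map_mul, map_prod]
        congr 1
        exact Finset.prod_congr rfl fun i _ => by rw [show k - 1 + 1 + i = k + i by omega]
      have hsplitB : f (qfact (n - k)) =
          f (qfact (n - (2 * k + 1))) * ∏ i ∈ Finset.range (k + 1), f (qint (t + i)) := by
        have h := qfact_add (n - (2 * k + 1)) (k + 1)
        rw [show n - (2 * k + 1) + (k + 1) = n - k by omega] at h
        rw [h, map_mul, map_prod]
        congr 1
        exact Finset.prod_congr rfl fun i _ =>
          by rw [show n - (2 * k + 1) + 1 + i = t + i by omega]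
      set x := f X with hxdef
      set S : ℕ := ∑ i ∈ Finset.range (k + 1), (t + i) with hS
      have hprodB : ∏ i ∈ Finset.range (k + 1), f (qint (t + i)) =
          (-1) ^ (k + 1) * x ^ S * ∏ i ∈ Finset.range (k + 1), f (qint (k + i)) := by
        have h1 : ∀ i ∈ Finset.range (k + 1),
            f (qint (t + i)) = (-1) * x ^ (t + i) * f (qint (2 * k - i)) := by
          intro i hi
          have hik := Finset.mem_range.mp hi
          have h := hrefl (2 * k - i) (by omega)
          rw [show n - (2 * k - i) = t + i by omega] at h
          rw [h]; ring
        rw [Finset.prod_congr rfl h1, Finset.prod_mul_distrib, Finset.prod_mul_distrib,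
          Finset.prod_const, Finset.card_range, Finset.prod_pow_eq_pow_sum]
        congr 1
        rw [← Finset.prod_range_reflect (fun i => f (qint (k + i))) (k + 1)]
        refine Finset.prod_congr rfl fun i hi => ?_
        have := Finset.mem_range.mp hi
        rw [show k + (k + 1 - 1 - i) = 2 * k - i by omega]
      have hsumc : (∑ i ∈ Finset.range (k + 1), i) = c := by
        have h' : (∑ i ∈ Finset.range (k + 1), i) * 2 = c * 2 := by
          have := Finset.sum_range_id_mul_two (k + 1)
          simp only [Nat.add_sub_cancel] at this
          rw [this, mul_comm (k + 1) k, hc]; ring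
        exact Nat.eq_of_mul_eq_mul_right (by norm_num) h'
      have hsum : S = (k + 1) * t + c := by
        rw [hS, Finset.sum_add_distrib, Finset.sum_const, Finset.card_range, smul_eq_mul, hsumc]
      have hexp : x ^ (3 * c) * x ^ S = 1 := by
        rw [← pow_add, hsum]
        have hkey : 3 * c + ((k + 1) * t + c) = n * (k + 1) := by
          rw [ht]
          zify at hc ⊢
          linear_combination -2 * hc
        rw [hkey, pow_mul, hxn, one_pow]
      rw [hsplitA] at hkA
      rw [hsplitB, hprodB] at hkB
      set P := ∏ i ∈ Finset.range (k + 1), f (qint (k + i)) with hP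
      have he2 : ((-1 : Polynomial ℤ ⧸ I) ^ (k + 1)) * ((-1) ^ (k + 1)) = 1 := by
        rw [← pow_add, show k + 1 + (k + 1) = 2 * (k + 1) by ring, pow_mul]
        norm_num
      have hCne : f (qfact (k + 1)) * (f (qfact (k - 1)) * f (qfact (n - (2 * k + 1)))) ≠ 0 :=
        mul_ne_zero (hFne _ (by omega)) (mul_ne_zero (hFne _ (by omega)) (hFne _ (by omega)))
      apply mul_right_cancel₀ hCne
      linear_combination f (qfact (n - (2 * k + 1))) * hkA -
        (-1) ^ (k + 1) * x ^ (3 * c) * f (qfact (k - 1)) * hkB -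
        f (qfact (k - 1)) * f (qfact (n - (2 * k + 1))) * P * x ^ (3 * c) * x ^ S * he2 -
        f (qfact (k - 1)) * f (qfact (n - (2 * k + 1))) * P * hexp
  · -- part 2
    have h2 : n - 1 + 1 = n := by omega
    rw [h2, hdvd, map_sub, map_one, sub_eq_zero]
    have hkey := gbinom_key (2 * (n - 1)) n (by omega)
    rw [show 2 * (n - 1) - n = n - 2 by omega] at hkey
    have hfn : qfact n = qfact (n - 1) * qint n := by
      have h1 : qfact (n - 1 + 1) = qfact (n - 1) * qint (n - 1 + 1) := rfl
      rwa [show n - 1 + 1 = n by omega] at h1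
    have hbig : qfact (2 * (n - 1)) =
        qfact (n - 1) * qint n * ∏ i ∈ Finset.range (n - 2), qint (n + 1 + i) := by
      have h := qfact_add n (n - 2)
      rw [show n + (n - 2) = 2 * (n - 1) by omega] at h
      rw [h, hfn]
    rw [hfn, hbig] at hkey
    have hcancel : gbinom (2 * (n - 1)) n * (qfact (n - 1) * qfact (n - 2)) =
        qfact (n - 1) * ∏ i ∈ Finset.range (n - 2), qint (n + 1 + i) := by
      apply mul_right_cancel₀ (qint_ne_zero (show 0 < n by omega))
      linear_combination hkey
    have hq := congrArg f hcancel
    rw [map_mul, map_mul, map_mul, map_prod] at hq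
    have hprod : ∏ i ∈ Finset.range (n - 2), f (qint (n + 1 + i)) = f (qfact (n - 2)) := by
      rw [qfact_eq_prod, map_prod]
      refine Finset.prod_congr rfl fun i _ => ?_
      rw [show n + 1 + i = n + (1 + i) by omega, hshift, show 1 + i = i + 1 by omega]
    rw [hprod] at hq
    have hCne : f (qfact (n - 1)) * f (qfact (n - 2)) ≠ 0 :=
      mul_ne_zero (hFne _ (by omega)) (hFne _ (by omega))
    apply mul_right_cancel₀ hCne
    linear_combination hq
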